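/- Let J be a set and let ℓ∞(J) denote the real Banach space of bounded functions J → ℝ with the supremum norm. Let Ω ⊆ ℓ∞(J) be a nonempty open convex cone that is invariant under the natural action of the full permutation group S_J of J (i.e., f ∘ σ ∈ Ω whenever f ∈ Ω and σ is a bijection of J). Then Ω contains a constant function: there exists c ∈ ℝ such that the constant function j ↦ c belongs to Ω. -/

import Mathlib

open scoped ENNReal

namespace PermInvConeAux

instance factOneLeTop : Fact ((1 : ℝ≥0∞) ≤ ⊤) := ⟨le_top⟩

variable {J : Type*}

/-- Constant function as an element of `ℓ∞`. -/
noncomputable def cf (J : Type*) (c : ℝ) : lp (fun _ : J => ℝ) ⊤ :=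
  ⟨fun _ => c, memℓp_infty ⟨|c|, by rintro x ⟨j, rfl⟩; simp [Real.norm_eq_abs]⟩⟩

@[simp] lemma cf_apply (c : ℝ) (j : J) : (cf J c) j = c := rfl

/-- Composition with a permutation, as an element of `ℓ∞`. -/
noncomputable def pc (σ : Equiv.Perm J) (x : lp (fun _ : J => ℝ) ⊤) :
    lp (fun _ : J => ℝ) ⊤ :=
  ⟨fun j => x (σ j), by
    apply memℓp_infty
    have h : Memℓp (⇑x) ⊤ := x.2
    rw [memℓp_infty_iff] at h
    have hr : (Set.range fun j => ‖x (σ j)‖) = Set.range fun j => ‖x j‖ :=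
      σ.surjective.range_comp fun j => ‖x j‖
    rw [hr]; exact h⟩

@[simp] lemma pc_apply (σ : Equiv.Perm J) (x : lp (fun _ : J => ℝ) ⊤) (j : J) :
    pc σ x j = x (σ j) := rfl

lemma pc_norm_le (σ : Equiv.Perm J) (x : lp (fun _ : J => ℝ) ⊤) : ‖pc σ x‖ ≤ ‖x‖ :=
  lp.norm_le_of_forall_le (norm_nonneg x) fun j =>
    lp.norm_apply_le_norm ENNReal.top_ne_zero x (σ j)

lemma abs_apply_le_norm (x : lp (fun _ : J => ℝ) ⊤) (j : J) : |x j| ≤ ‖x‖ := by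
  have h := lp.norm_apply_le_norm ENNReal.top_ne_zero x j
  rwa [Real.norm_eq_abs] at h

/-- In an infinite index set, some value `c` has the property that every
neighborhood of `c` is hit by `f` on a set of full cardinality. -/
lemma exists_cluster [Infinite J] (f : lp (fun _ : J => ℝ) ⊤) :
    ∃ c : ℝ, |c| ≤ ‖f‖ ∧
      ∀ δ : ℝ, 0 < δ → Cardinal.mk {j : J | |f j - c| < δ} = Cardinal.mk J := by
  by_contra hcon
  push_neg at hcon
  have hJ : (Cardinal.aleph0 : Cardinal) ≤ Cardinal.mk J := Cardinal.infinite_iff.mp ‹_›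
  -- for each c in the compact interval pick δ with small preimage
  set K : Set ℝ := Set.Icc (-‖f‖) ‖f‖ with hK
  have hc' : ∀ c : K, ∃ δ : ℝ, 0 < δ ∧
      Cardinal.mk {j : J | |f j - (c : ℝ)| < δ} < Cardinal.mk J := by
    intro c
    have hcK : |(c : ℝ)| ≤ ‖f‖ := abs_le.mpr ⟨c.2.1, c.2.2⟩
    obtain ⟨δ, hδ, hne⟩ := hcon c hcK
    exact ⟨δ, hδ, lt_of_le_of_ne (Cardinal.mk_set_le _) hne⟩
  choose δ hδpos hδcard using hc'
  have hKcomp : IsCompact K := isCompact_Icc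
  have hcover : K ⊆ ⋃ c : K, Metric.ball (c : ℝ) (δ c) := by
    intro x hx
    exact Set.mem_iUnion.mpr ⟨⟨x, hx⟩, Metric.mem_ball_self (hδpos ⟨x, hx⟩)⟩
  obtain ⟨t, ht⟩ := hKcomp.elim_finite_subcover (fun c : K => Metric.ball (c : ℝ) (δ c))
    (fun _ => Metric.isOpen_ball) hcover
  -- J is covered by finitely many small sets
  have hcoverJ : (Set.univ : Set J) ⊆ ⋃ c ∈ t, {j : J | |f j - (c : ℝ)| < δ c} := by
    intro j _
    have hfj : f j ∈ K := by
      constructor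
      · linarith [(abs_le.mp (abs_apply_le_norm f j)).1]
      · exact (abs_le.mp (abs_apply_le_norm f j)).2
    obtain ⟨c, hct, hcb⟩ := Set.mem_iUnion₂.mp (ht hfj)
    refine Set.mem_iUnion₂.mpr ⟨c, hct, ?_⟩
    simpa [Real.dist_eq] using hcb
  have hsmall : ∀ s : Finset K,
      Cardinal.mk (⋃ c ∈ s, {j : J | |f j - (c : ℝ)| < δ c} : Set J) < Cardinal.mk J := by
    intro s
    classical
    induction s using Finset.induction_on with
    | empty =>
      simp only [Finset.notMem_empty, Set.iUnion_of_empty, Set.iUnion_empty]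
      exact lt_of_lt_of_le (by simpa using Cardinal.aleph0_pos) hJ
    | @insert a s' hnotmem ih =>
      rw [Finset.set_biUnion_insert]
      exact lt_of_le_of_lt (Cardinal.mk_union_le _ _)
        (Cardinal.add_lt_of_lt hJ (hδcard a) ih)
  have : Cardinal.mk J ≤ Cardinal.mk (⋃ c ∈ t, {j : J | |f j - (c : ℝ)| < δ c} : Set J) := by
    have := Cardinal.mk_le_mk_of_subset hcoverJ
    simpa using this
  exact absurd (lt_of_le_of_lt this (hsmall t)) (lt_irrefl _)

end PermInvConeAux

open PermInvConeAux

/-- Every nonempty open convex cone in `ℓ^∞(J)` that is invariant under the natural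
action of the full permutation group of `J` contains a constant function. -/
theorem perm_invariant_open_cone_contains_constant
    {J : Type*} :
    letI : Fact ((1 : ℝ≥0∞) ≤ ⊤) := ⟨le_top⟩
    ∀ Ω : Set (lp (fun _ : J => ℝ) ⊤),
      Ω.Nonempty → IsOpen Ω → Convex ℝ Ω →
      (∀ t : ℝ, 0 < t → ∀ f ∈ Ω, t • f ∈ Ω) →
      (∀ σ : Equiv.Perm J, ∀ f ∈ Ω, ∀ g : lp (fun _ : J => ℝ) ⊤,
        (∀ j : J, g j = f (σ j)) → g ∈ Ω) →
      ∃ c : ℝ, ∃ f ∈ Ω, ∀ j : J, f j = c := by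
  intro Ω hne hopen hconv _hcone hinv
  classical
  obtain ⟨f, hf⟩ := hne
  rcases isEmpty_or_nonempty J with hJe | hJn
  · exact ⟨0, f, hf, fun j => (IsEmpty.false j).elim⟩
  rcases finite_or_infinite J with hJf | hJi
  · -- finite case: average over the whole permutation group
    haveI := Fintype.ofFinite J
    set N : ℕ := Fintype.card (Equiv.Perm J) with hN
    have hNpos : 0 < N := Fintype.card_pos
    set h : lp (fun _ : J => ℝ) ⊤ := ∑ σ : Equiv.Perm J, ((N : ℝ)⁻¹) • pc σ f with hh
    have hhΩ : h ∈ Ω := by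
      apply hconv.sum_mem (fun _ _ => by positivity)
      · rw [Finset.sum_const, Finset.card_univ, ← hN, nsmul_eq_mul]
        field_simp
      · intro σ _
        exact hinv σ f hf (pc σ f) (fun j => rfl)
    obtain ⟨j₀⟩ := hJn
    refine ⟨(N : ℝ)⁻¹ * ∑ σ : Equiv.Perm J, f (σ j₀), h, hhΩ, ?_⟩
    intro j
    have hsum : ∑ σ : Equiv.Perm J, f (σ j₀) = ∑ σ : Equiv.Perm J, f (σ j) := by
      refine Fintype.sum_equiv (Equiv.mulRight (Equiv.swap j j₀)) _ _ ?_
      intro σ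
      simp [Equiv.Perm.mul_apply, Equiv.swap_apply_right]
    have happ : h j = ∑ σ : Equiv.Perm J, ((N : ℝ)⁻¹) * f (σ j) := by
      rw [hh, lp.coeFn_sum]
      simp [Finset.sum_apply, lp.coeFn_smul, pc_apply]
    rw [happ, ← Finset.mul_sum, ← hsum]
  · -- infinite case
    haveI := hJi
    obtain ⟨ε, hε, hball⟩ := Metric.isOpen_iff.mp hopen f hf
    set M : ℝ := ‖f‖ with hM
    have hM0 : 0 ≤ M := norm_nonneg f
    obtain ⟨c, hcM, hcluster⟩ := exists_cluster f
    set δ : ℝ := ε / 4 with hδ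
    have hδpos : 0 < δ := by positivity
    set A : Set J := {j : J | |f j - c| < δ} with hA
    have hAcard : Cardinal.mk A = Cardinal.mk J := hcluster δ hδpos
    set S : Set J := Aᶜ with hS
    -- choose n
    obtain ⟨n, hn⟩ := exists_nat_gt (8 * M / ε)
    have hn0 : 0 < n := by
      have : (0 : ℝ) ≤ 8 * M / ε := by positivity
      exact_mod_cast (by exact_mod_cast lt_of_le_of_lt this hn : (0:ℝ) < (n:ℝ))
    have hnR : (0 : ℝ) < n := by exact_mod_cast hn0
    have h2Mn : 2 * M / n < δ := by
      rw [hδ, div_lt_iff₀ hnR] at *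
      rw [div_lt_iff₀ hε] at hn
      nlinarith
    -- embedding of n copies of S into A
    have hcard : Cardinal.mk (Fin n × S) ≤ Cardinal.mk A := by
      rw [hAcard]
      calc Cardinal.mk (Fin n × S)
          = Cardinal.lift (Cardinal.mk (Fin n)) * Cardinal.lift (Cardinal.mk S) :=
            Cardinal.mk_prod _ _
        _ ≤ max (max (Cardinal.lift (Cardinal.mk (Fin n))) (Cardinal.lift (Cardinal.mk S)))
              Cardinal.aleph0 := Cardinal.mul_le_max _ _
        _ ≤ Cardinal.mk J := by
            apply max_le (max_le ?_ ?_) (Cardinal.infinite_iff.mp ‹_›)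
            · rw [Cardinal.mk_fin, Cardinal.lift_natCast]
              exact le_trans (Cardinal.nat_lt_aleph0 n).le (Cardinal.infinite_iff.mp ‹_›)
            · rw [Cardinal.lift_uzero]
              exact Cardinal.mk_set_le _
    obtain ⟨ι⟩ := Cardinal.le_def _ _ |>.mp hcard
    -- the disjoint copies of S inside A
    set Sq : Fin n → Set J := fun q => Set.range (fun s : S => ((ι (q, s) : A) : J)) with hSq
    have hinj : ∀ q : Fin n, Function.Injective (fun s : S => ((ι (q, s) : A) : J)) := by
      intro q s t hst
      have := ι.injective (Subtype.ext hst)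
      exact (Prod.ext_iff.mp this).2
    set bij : ∀ q : Fin n, S ≃ Sq q := fun q => Equiv.ofInjective _ (hinj q) with hbij
    have hSqA : ∀ q : Fin n, Sq q ⊆ A := by
      rintro q j ⟨s, rfl⟩
      exact (ι (q, s)).2
    have hSqS : ∀ q : Fin n, ∀ j ∈ Sq q, j ∉ S := fun q j hj hjS => hjS (hSqA q hj)
    have hSqdisj : ∀ p q : Fin n, p ≠ q → ∀ j, j ∈ Sq p → j ∉ Sq q := by
      rintro p q hpq j ⟨s, rfl⟩ ⟨u, hu⟩
      have := ι.injective (Subtype.ext hu)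
      exact hpq ((Prod.ext_iff.mp this).1).symm
    -- the permutations
    set g : Fin n → J → J := fun q j =>
      if h1 : j ∈ S then ((bij q ⟨j, h1⟩ : Sq q) : J)
      else if h2 : j ∈ Sq q then (((bij q).symm ⟨j, h2⟩ : S) : J)
      else j with hg
    have hmemSq : ∀ q (x : S), ((bij q x : Sq q) : J) ∈ Sq q := fun q x => (bij q x).2
    have hmemS : ∀ q (y : Sq q), (((bij q).symm y : S) : J) ∈ S := fun q y => ((bij q).symm y).2
    have hginv : ∀ q : Fin n, Function.Involutive (g q) := by
      intro q j
      by_cases h1 : j ∈ S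
      · have e1 : g q j = ((bij q ⟨j, h1⟩ : Sq q) : J) := by rw [hg]; simp [h1]
        have hmem := hmemSq q ⟨j, h1⟩
        have hnotS : ((bij q ⟨j, h1⟩ : Sq q) : J) ∉ S := hSqS q _ hmem
        rw [e1, hg]
        simp only [hnotS, dif_neg, not_false_iff, hmem, dif_pos]
        have : (⟨((bij q ⟨j, h1⟩ : Sq q) : J), hmem⟩ : Sq q) = bij q ⟨j, h1⟩ :=
          Subtype.ext rfl
        rw [this, Equiv.symm_apply_apply]
      · by_cases h2 : j ∈ Sq q
        · have e1 : g q j = (((bij q).symm ⟨j, h2⟩ : S) : J) := by rw [hg]; simp [h1, h2]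
          have hmem := hmemS q ⟨j, h2⟩
          rw [e1, hg]
          simp only [hmem, dif_pos]
          have : (⟨(((bij q).symm ⟨j, h2⟩ : S) : J), hmem⟩ : S) = (bij q).symm ⟨j, h2⟩ :=
            Subtype.ext rfl
          rw [this, Equiv.apply_symm_apply]
        · have e1 : g q j = j := by rw [hg]; simp [h1, h2]
          rw [e1, e1]
    set τ : Fin n → Equiv.Perm J := fun q => Function.Involutive.toPerm _ (hginv q) with hτ
    have hτ_apply : ∀ q j, τ q j = g q j := fun q j => rfl
    -- key: away from S q, τ q sends j into A
    have hgood : ∀ q : Fin n, ∀ j : J, j ∉ Sq q → τ q j ∈ A := by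
      intro q j hj
      rw [hτ_apply]
      simp only [hg]
      by_cases h1 : j ∈ S
      · rw [dif_pos h1]
        exact hSqA q (hmemSq q ⟨j, h1⟩)
      · rw [dif_neg h1, dif_neg hj]
        simpa [hS] using h1
    -- the average
    set h : lp (fun _ : J => ℝ) ⊤ := ∑ q : Fin n, ((n : ℝ)⁻¹) • pc (τ q) f with hh
    have happ : ∀ j, h j = ∑ q : Fin n, ((n : ℝ)⁻¹) * f (τ q j) := by
      intro j
      rw [hh, lp.coeFn_sum]
      simp [Finset.sum_apply, lp.coeFn_smul, pc_apply]
    -- pointwise bound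
    have hbound : ∀ j : J, |h j - c| ≤ ε / 2 := by
      intro j
      have hterm : ∀ q : Fin n, |f (τ q j) - c| ≤ δ + (if j ∈ Sq q then 2 * M else 0) := by
        intro q
        by_cases hq : j ∈ Sq q
        · simp only [hq, if_pos]
          have h1 : |f (τ q j)| ≤ M := abs_apply_le_norm f _
          have h2 : |f (τ q j) - c| ≤ |f (τ q j)| + |c| := abs_sub _ _
          have := hcM
          nlinarith [abs_nonneg (f (τ q j))]
        · simp only [hq, if_neg, not_false_iff, add_zero]
          exact (hgood q j hq).le
      have hsum1 : ∑ q : Fin n, (if j ∈ Sq q then (2 * M : ℝ) else 0) ≤ 2 * M := by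
        by_cases hex : ∃ q : Fin n, j ∈ Sq q
        · obtain ⟨q₀, hq₀⟩ := hex
          have : ∑ q : Fin n, (if j ∈ Sq q then (2 * M : ℝ) else 0)
              = if j ∈ Sq q₀ then (2 * M : ℝ) else 0 := by
            apply Finset.sum_eq_single q₀
            · intro q _ hq
              have : j ∉ Sq q := fun hmem => hq (by
                by_contra h'
                exact hSqdisj q q₀ h' j hmem hq₀ |>.elim)
              simp [this]
            · intro habs
              exact absurd (Finset.mem_univ q₀) habs
          rw [this]
          simp [hq₀, hM0]
        · push_neg at hex
          have hz : ∀ q : Fin n, (if j ∈ Sq q then (2 * M : ℝ) else 0) = 0 :=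
            fun q => if_neg (hex q)
          rw [Finset.sum_congr rfl fun q _ => hz q]
          simp [hM0]
      have habs : |∑ q : Fin n, (f (τ q j) - c)| ≤ n * δ + 2 * M := by
        calc |∑ q : Fin n, (f (τ q j) - c)| ≤ ∑ q : Fin n, |f (τ q j) - c| :=
              Finset.abs_sum_le_sum_abs _ _
          _ ≤ ∑ q : Fin n, (δ + (if j ∈ Sq q then 2 * M else 0)) :=
              Finset.sum_le_sum fun q _ => hterm q
          _ = n * δ + ∑ q : Fin n, (if j ∈ Sq q then (2 * M : ℝ) else 0) := by
              rw [Finset.sum_add_distrib, Finset.sum_const, Finset.card_univ,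
                Fintype.card_fin, nsmul_eq_mul]
          _ ≤ n * δ + 2 * M := by linarith
      have hjc : h j - c = (n : ℝ)⁻¹ * ∑ q : Fin n, (f (τ q j) - c) := by
        rw [happ j, Finset.mul_sum]
        have hterm2 : ∀ q : Fin n, (n : ℝ)⁻¹ * (f (τ q j) - c)
            = (n : ℝ)⁻¹ * f (τ q j) - (n : ℝ)⁻¹ * c := fun q => by ring
        rw [Finset.sum_congr rfl fun q _ => hterm2 q, Finset.sum_sub_distrib,
          Finset.sum_const, Finset.card_univ, Fintype.card_fin, nsmul_eq_mul]
        congr 1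
        field_simp
      rw [hjc, abs_mul, abs_inv, Nat.abs_cast]
      have : (n : ℝ)⁻¹ * (n * δ + 2 * M) = δ + 2 * M / n := by
        field_simp
      calc (n : ℝ)⁻¹ * |∑ q : Fin n, (f (τ q j) - c)|
          ≤ (n : ℝ)⁻¹ * (n * δ + 2 * M) := by
            apply mul_le_mul_of_nonneg_left habs (by positivity)
        _ = δ + 2 * M / n := this
        _ ≤ ε / 2 := by rw [hδ] at *; linarith
    -- shift to get the exact constant
    set e : lp (fun _ : J => ℝ) ⊤ := cf J c - h with he
    have he_apply : ∀ j, e j = c - h j := by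
      intro j
      rw [he, lp.coeFn_sub, Pi.sub_apply, cf_apply]
    have he_norm : ‖e‖ ≤ ε / 2 := by
      apply lp.norm_le_of_forall_le (by positivity)
      intro j
      rw [Real.norm_eq_abs, he_apply, abs_sub_comm]
      exact hbound j
    set x : Fin n → lp (fun _ : J => ℝ) ⊤ := fun q => pc (τ q) (f + pc (τ q)⁻¹ e) with hx
    have hxΩ : ∀ q : Fin n, x q ∈ Ω := by
      intro q
      have hin : f + pc (τ q)⁻¹ e ∈ Ω := by
        apply hball
        rw [Metric.mem_ball, dist_eq_norm]
        have : f + pc (τ q)⁻¹ e - f = pc (τ q)⁻¹ e := by abel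
        rw [this]
        calc ‖pc (τ q)⁻¹ e‖ ≤ ‖e‖ := pc_norm_le _ _
          _ ≤ ε / 2 := he_norm
          _ < ε := by linarith
      exact hinv (τ q) _ hin (x q) (fun j => rfl)
    refine ⟨c, ∑ q : Fin n, ((n : ℝ)⁻¹) • x q, ?_, ?_⟩
    · apply hconv.sum_mem (fun _ _ => by positivity)
      · rw [Finset.sum_const, Finset.card_univ, Fintype.card_fin, nsmul_eq_mul]
        field_simp
      · intro q _
        exact hxΩ q
    · intro j
      rw [lp.coeFn_sum]
      rw [Finset.sum_apply]
      have hx_apply : ∀ q : Fin n, (((n : ℝ)⁻¹) • x q) j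
          = (n : ℝ)⁻¹ * (f (τ q j) + e j) := by
        intro q
        rw [lp.coeFn_smul, Pi.smul_apply, smul_eq_mul]
        congr 1
        show (f + pc (τ q)⁻¹ e) (τ q j) = f (τ q j) + e j
        rw [lp.coeFn_add, Pi.add_apply, pc_apply, Equiv.Perm.inv_def, Equiv.symm_apply_apply]
      rw [Finset.sum_congr rfl (fun q _ => hx_apply q)]
      have hsplit : ∑ q : Fin n, (n : ℝ)⁻¹ * (f (τ q j) + e j)
          = (∑ q : Fin n, (n : ℝ)⁻¹ * f (τ q j)) + e j := by
        simp only [mul_add]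
        rw [Finset.sum_add_distrib]
        congr 1
        rw [Finset.sum_const, Finset.card_univ, Fintype.card_fin, nsmul_eq_mul]
        field_simp
      rw [hsplit, ← happ j, he_apply]
      ring
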